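/- Along solutions of the rate-adjusted replicator dynamics ẋ_{iα} = λᵢ x_{iα}(ωᵢ(x) − ω_{iα}(x)), the potential F₀(x) = Φ(P(x)) − Φ(y*) is nonincreasing: dF₀/dt = Σᵢ λᵢρᵢ [ωᵢ(x)² − ρᵢ⁻¹ Σ_α x_{iα} ω_{iα}(x)²] ≤ 0, with equality iff ω_{iα}(x) = ωᵢ(x) for all α in the support of x. -/

import Mathlib

/-- Along solutions of the rate-adjusted replicator dynamics, the
potential `F₀` is nonincreasing:
`dF₀/dt = Σᵢ λᵢρᵢ [ωᵢ(x)² − ρᵢ⁻¹ Σ_α x_{iα} ω_{iα}(x)²] ≤ 0`, with equality iff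
`ω_{iα}(x) = ωᵢ(x)` on the support of `x`. -/
theorem stmt7 {ι : Type*} [Fintype ι] [DecidableEq ι]
    {A : ι → Type*} [∀ i, Fintype (A i)] [∀ i, DecidableEq (A i)]
    (ρ lam : ι → ℝ) (hρ : ∀ i, 0 < ρ i) (hlam : ∀ i, 0 < lam i)
    (ω : (Σ i, A i) → ((Σ i, A i) → ℝ) → ℝ)
    (wbar : ι → ((Σ i, A i) → ℝ) → ℝ)
    (hwbar : ∀ i x, wbar i x = (ρ i)⁻¹ * ∑ α : A i, x ⟨i, α⟩ * ω ⟨i, α⟩ x)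
    (F0 : ((Σ i, A i) → ℝ) → ℝ)
    (hF0diff : Differentiable ℝ F0)
    (hF0 : ∀ (z : (Σ i, A i) → ℝ) (a : Σ i, A i),
      HasDerivAt (fun s => F0 (Function.update z a s)) (ω a z) (z a))
    (x : ℝ → (Σ i, A i) → ℝ)
    (hode : ∀ (a : Σ i, A i) (t : ℝ),
      HasDerivAt (fun s => x s a) (lam a.1 * x t a * (wbar a.1 (x t) - ω a (x t))) t)
    (hΔ : ∀ t, (∀ a, 0 ≤ x t a) ∧ ∀ i, ∑ α : A i, x t ⟨i, α⟩ = ρ i)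
    (t : ℝ) :
    HasDerivAt (fun s => F0 (x s))
        (∑ i, lam i * ρ i * ((wbar i (x t)) ^ 2 -
          (ρ i)⁻¹ * ∑ α : A i, x t ⟨i, α⟩ * (ω ⟨i, α⟩ (x t)) ^ 2)) t ∧
      (∑ i, lam i * ρ i * ((wbar i (x t)) ^ 2 -
          (ρ i)⁻¹ * ∑ α : A i, x t ⟨i, α⟩ * (ω ⟨i, α⟩ (x t)) ^ 2)) ≤ 0 ∧
      ((∑ i, lam i * ρ i * ((wbar i (x t)) ^ 2 -
          (ρ i)⁻¹ * ∑ α : A i, x t ⟨i, α⟩ * (ω ⟨i, α⟩ (x t)) ^ 2)) = 0 ↔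
        ∀ a : Σ i, A i, 0 < x t a → ω a (x t) = wbar a.1 (x t)) := by
  classical
  set v : (Σ i, A i) → ℝ :=
    fun a => lam a.1 * x t a * (wbar a.1 (x t) - ω a (x t)) with hvdef
  -- derivative of the curve
  have hx : HasDerivAt x v t := hasDerivAt_pi.2 fun a => hode a t
  have hL : HasFDerivAt F0 (fderiv ℝ F0 (x t)) (x t) := (hF0diff (x t)).hasFDerivAt
  have hcomp : HasDerivAt (fun s => F0 (x s)) (fderiv ℝ F0 (x t) v) t :=
    hL.comp_hasDerivAt t hx
  -- partial derivatives are ω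
  have hgrad : ∀ a, fderiv ℝ F0 (x t) (Pi.single a 1) = ω a (x t) := by
    intro a
    have hline : HasDerivAt (fun s => Function.update (x t) a s)
        (Pi.single a 1) (x t a) := by
      apply hasDerivAt_pi.2
      intro b
      by_cases hb : b = a
      · subst hb
        simpa using hasDerivAt_id' (x t b)
      · simp only [Function.update_of_ne hb, Pi.single_apply, if_neg hb]
        exact hasDerivAt_const _ _
    have hL' : HasFDerivAt F0 (fderiv ℝ F0 (x t))
        (Function.update (x t) a (x t a)) := by
      rw [Function.update_eq_self]; exact hL
    have h1 : HasDerivAt (fun s => F0 (Function.update (x t) a s))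
        (fderiv ℝ F0 (x t) (Pi.single a 1)) (x t a) :=
      hL'.comp_hasDerivAt _ hline
    exact h1.unique (hF0 (x t) a)
  -- value of the differential on v
  have hval : fderiv ℝ F0 (x t) v = ∑ a, v a * ω a (x t) := by
    have hv' : v = ∑ a : Σ i, A i, v a • (Pi.single a (1 : ℝ) : (Σ i, A i) → ℝ) := by
      funext b
      simp [Finset.sum_apply, Pi.single_apply]
    conv_lhs => rw [hv']
    rw [map_sum]
    simp only [map_smul, hgrad, smul_eq_mul]
  -- per-player algebra
  have hS1 : ∀ i, ∑ α : A i, x t ⟨i, α⟩ * ω ⟨i, α⟩ (x t) = ρ i * wbar i (x t) := by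
    intro i
    have hρ0 : ρ i ≠ 0 := (hρ i).ne'
    rw [hwbar i (x t)]
    field_simp
  have key : ∀ i, ∑ α : A i, v ⟨i, α⟩ * ω ⟨i, α⟩ (x t)
      = lam i * ρ i * ((wbar i (x t)) ^ 2 -
          (ρ i)⁻¹ * ∑ α : A i, x t ⟨i, α⟩ * (ω ⟨i, α⟩ (x t)) ^ 2) := by
    intro i
    have e1 : ∀ α ∈ (Finset.univ : Finset (A i)),
        v ⟨i, α⟩ * ω ⟨i, α⟩ (x t)
        = lam i * wbar i (x t) * (x t ⟨i, α⟩ * ω ⟨i, α⟩ (x t))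
          - lam i * (x t ⟨i, α⟩ * (ω ⟨i, α⟩ (x t)) ^ 2) := by
      intro α _
      simp only [hvdef]
      ring
    rw [Finset.sum_congr rfl e1, Finset.sum_sub_distrib, ← Finset.mul_sum,
      ← Finset.mul_sum, hS1 i]
    have hρ0 : ρ i ≠ 0 := (hρ i).ne'
    field_simp
  have hsum : ∑ a, v a * ω a (x t)
      = ∑ i, lam i * ρ i * ((wbar i (x t)) ^ 2 -
          (ρ i)⁻¹ * ∑ α : A i, x t ⟨i, α⟩ * (ω ⟨i, α⟩ (x t)) ^ 2) := by
    rw [← Finset.univ_sigma_univ, Finset.sum_sigma]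
    exact Finset.sum_congr rfl fun i _ => key i
  have hderiv : HasDerivAt (fun s => F0 (x s))
      (∑ i, lam i * ρ i * ((wbar i (x t)) ^ 2 -
          (ρ i)⁻¹ * ∑ α : A i, x t ⟨i, α⟩ * (ω ⟨i, α⟩ (x t)) ^ 2)) t := by
    rw [← hsum, ← hval]; exact hcomp
  -- rewrite each term as minus a sum of squares
  have hterm : ∀ i, lam i * ρ i * ((wbar i (x t)) ^ 2 -
      (ρ i)⁻¹ * ∑ α : A i, x t ⟨i, α⟩ * (ω ⟨i, α⟩ (x t)) ^ 2)
      = -(lam i * ∑ α : A i, x t ⟨i, α⟩ * (ω ⟨i, α⟩ (x t) - wbar i (x t)) ^ 2) := by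
    intro i
    have hρ0 : ρ i ≠ 0 := (hρ i).ne'
    have e1 : ∑ α : A i, x t ⟨i, α⟩ * (ω ⟨i, α⟩ (x t) - wbar i (x t)) ^ 2
        = (∑ α : A i, x t ⟨i, α⟩ * (ω ⟨i, α⟩ (x t)) ^ 2)
          - 2 * wbar i (x t) * (∑ α : A i, x t ⟨i, α⟩ * ω ⟨i, α⟩ (x t))
          + (wbar i (x t)) ^ 2 * (∑ α : A i, x t ⟨i, α⟩) := by
      rw [Finset.sum_congr rfl (fun α _ => by
        show x t ⟨i, α⟩ * (ω ⟨i, α⟩ (x t) - wbar i (x t)) ^ 2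
          = x t ⟨i, α⟩ * (ω ⟨i, α⟩ (x t)) ^ 2
            - 2 * wbar i (x t) * (x t ⟨i, α⟩ * ω ⟨i, α⟩ (x t))
            + (wbar i (x t)) ^ 2 * x t ⟨i, α⟩
        ring), Finset.sum_add_distrib, Finset.sum_sub_distrib, ← Finset.mul_sum,
        ← Finset.mul_sum]
    rw [e1, hS1 i, (hΔ t).2 i]
    field_simp
    ring
  have hQnn : ∀ i, 0 ≤ ∑ α : A i, x t ⟨i, α⟩ * (ω ⟨i, α⟩ (x t) - wbar i (x t)) ^ 2 :=
    fun i => Finset.sum_nonneg fun α _ =>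
      mul_nonneg ((hΔ t).1 ⟨i, α⟩) (sq_nonneg _)
  have hle : (∑ i, lam i * ρ i * ((wbar i (x t)) ^ 2 -
      (ρ i)⁻¹ * ∑ α : A i, x t ⟨i, α⟩ * (ω ⟨i, α⟩ (x t)) ^ 2)) ≤ 0 := by
    rw [Finset.sum_congr rfl fun i _ => hterm i]
    apply Finset.sum_nonpos
    intro i _
    simp only [neg_nonpos]
    exact mul_nonneg (hlam i).le (hQnn i)
  refine ⟨hderiv, hle, ?_⟩
  rw [Finset.sum_congr rfl fun i _ => hterm i, Finset.sum_neg_distrib]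
  rw [neg_eq_zero]
  rw [Finset.sum_eq_zero_iff_of_nonneg fun i _ => mul_nonneg (hlam i).le (hQnn i)]
  constructor
  · intro h a ha
    obtain ⟨i, α⟩ := a
    have h1 := h i (Finset.mem_univ i)
    have h2 : ∑ α : A i, x t ⟨i, α⟩ * (ω ⟨i, α⟩ (x t) - wbar i (x t)) ^ 2 = 0 := by
      rcases mul_eq_zero.1 h1 with h | h
      · exact absurd h (hlam i).ne'
      · exact h
    rw [Finset.sum_eq_zero_iff_of_nonneg
      (fun α _ => mul_nonneg ((hΔ t).1 ⟨i, α⟩) (sq_nonneg _))] at h2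
    have h3 := h2 α (Finset.mem_univ α)
    rcases mul_eq_zero.1 h3 with h | h
    · exact absurd h ha.ne'
    · have := pow_eq_zero_iff (n := 2) (by norm_num) |>.1 h
      linarith [sub_eq_zero.1 this]
  · intro h i _
    have : ∑ α : A i, x t ⟨i, α⟩ * (ω ⟨i, α⟩ (x t) - wbar i (x t)) ^ 2 = 0 := by
      apply Finset.sum_eq_zero
      intro α _
      rcases ((hΔ t).1 ⟨i, α⟩).eq_or_lt with h0 | h0
      · rw [← h0, zero_mul]
      · rw [h ⟨i, α⟩ h0, sub_self, zero_pow two_ne_zero, mul_zero]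
    rw [this, mul_zero]
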